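/- Let σ(x) = 1/(1+e^{-x}) be the sigmoid function, let α ∈ ℝ, let τ > 0, and let U be uniformly distributed on (0,1). Define G(α,τ) = σ((α + log U − log(1−U))/τ). Then for every ε ∈ (0,1/2), (1 − σ(α)) − (τ/4)·log(1/ε) ≤ P(G(α,τ) ≤ ε) ≤ 1 − σ(α). -/

import Mathlib

open MeasureTheory NNReal

/-- The sigmoid function σ(x) = 1/(1+e^{-x}). -/
noncomputable def sigmoid (x : ℝ) : ℝ := 1 / (1 + Real.exp (-x))

lemma one_add_exp_pos (x : ℝ) : (0:ℝ) < 1 + Real.exp (-x) := by positivity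

lemma sigmoid_pos (x : ℝ) : 0 < sigmoid x := by
  unfold sigmoid; positivity

lemma sigmoid_lt_one (x : ℝ) : sigmoid x < 1 := by
  unfold sigmoid
  rw [div_lt_one (one_add_exp_pos x)]
  linarith [Real.exp_pos (-x)]

lemma sigmoid_strictMono : StrictMono sigmoid := by
  intro x y hxy
  unfold sigmoid
  apply div_lt_div_of_pos_left one_pos (one_add_exp_pos y)
  have := Real.exp_lt_exp.2 (neg_lt_neg hxy)
  linarith

lemma hasDerivAt_sigmoid (x : ℝ) :
    HasDerivAt sigmoid (Real.exp (-x) / (1 + Real.exp (-x))^2) x := by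
  have hf : HasDerivAt (fun x : ℝ => 1 + Real.exp (-x)) (-Real.exp (-x)) x := by
    simpa using ((Real.hasDerivAt_exp (-x)).comp x ((hasDerivAt_id x).neg)).const_add 1
  have hne : (1 + Real.exp (-x)) ≠ 0 := (one_add_exp_pos x).ne'
  have := (hasDerivAt_const x (1:ℝ)).div hf hne
  exact this.congr_deriv (by ring)

lemma deriv_sigmoid (x : ℝ) : deriv sigmoid x = Real.exp (-x) / (1 + Real.exp (-x))^2 :=
  (hasDerivAt_sigmoid x).deriv

lemma sigmoid_lipschitz : LipschitzWith (1/4 : ℝ≥0) sigmoid := by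
  apply lipschitzWith_of_nnnorm_deriv_le (fun x => (hasDerivAt_sigmoid x).differentiableAt)
  intro x
  rw [← NNReal.coe_le_coe]
  simp only [coe_nnnorm, Real.norm_eq_abs, deriv_sigmoid]
  have h1 : (0:ℝ) < Real.exp (-x) := Real.exp_pos _
  rw [abs_of_nonneg (by positivity), div_le_iff₀ (by positivity)]
  push_cast
  nlinarith [sq_nonneg (1 - Real.exp (-x))]

lemma sigmoid_dist (a b : ℝ) : |sigmoid a - sigmoid b| ≤ (1/4) * |a - b| := by
  have := sigmoid_lipschitz.dist_le_mul a b
  simpa [Real.dist_eq] using this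

lemma sigmoid_neg (x : ℝ) : sigmoid (-x) = 1 - sigmoid x := by
  unfold sigmoid
  rw [neg_neg, Real.exp_neg]
  have h1 : (0:ℝ) < Real.exp (-x) := Real.exp_pos _
  field_simp
  ring

lemma sigmoid_logit {u : ℝ} (hu : u ∈ Set.Ioo (0:ℝ) 1) :
    sigmoid (Real.log u - Real.log (1 - u)) = u := by
  obtain ⟨h0, h1⟩ := hu
  unfold sigmoid
  rw [neg_sub, ← Real.log_div (by linarith) (ne_of_gt h0),
    Real.exp_log (div_pos (by linarith) h0)]
  field_simp
  ring

lemma sigmoid_le_iff {x ε : ℝ} (hε : ε ∈ Set.Ioo (0:ℝ) 1) :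
    sigmoid x ≤ ε ↔ x ≤ Real.log (ε / (1 - ε)) := by
  obtain ⟨h0, h1⟩ := hε
  have h1' : (0:ℝ) < 1 - ε := by linarith
  constructor
  · intro h
    by_contra hc
    push_neg at hc
    have := sigmoid_strictMono hc
    rw [show Real.log (ε / (1 - ε)) = -(Real.log ((1-ε)/ε)) by
      rw [← Real.log_inv]; congr 1; field_simp] at this
    rw [show sigmoid (-(Real.log ((1-ε)/ε))) = ε by
      unfold sigmoid
      rw [neg_neg, Real.exp_log (by positivity)]
      field_simp
      ring] at this
    linarith
  · intro h
    calc sigmoid x ≤ sigmoid (Real.log (ε / (1 - ε))) := sigmoid_strictMono.monotone h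
      _ = ε := by
        have : Real.log (ε / (1 - ε)) = Real.log ε - Real.log (1 - ε) :=
          Real.log_div (ne_of_gt h0) (ne_of_gt h1')
        rw [this]
        exact sigmoid_logit ⟨h0, by linarith⟩

/-- For U uniform on (0,1) and G(α,τ) = σ((α + log U − log(1−U))/τ),
    for every ε ∈ (0,1/2), (1 − σ(α)) − (τ/4)·log(1/ε) ≤ P(G(α,τ) ≤ ε) ≤ 1 − σ(α). -/
theorem gumbel_lower_tail_bounds (α τ ε : ℝ) (hτ : 0 < τ)
    (hε : ε ∈ Set.Ioo (0:ℝ) (1/2)) :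
    ENNReal.ofReal ((1 - _root_.sigmoid α) - τ / 4 * Real.log (1/ε)) ≤
      (volume.restrict (Set.Ioo (0:ℝ) 1))
        {u : ℝ | _root_.sigmoid ((α + Real.log u - Real.log (1 - u)) / τ) ≤ ε} ∧
    (volume.restrict (Set.Ioo (0:ℝ) 1))
        {u : ℝ | _root_.sigmoid ((α + Real.log u - Real.log (1 - u)) / τ) ≤ ε}
      ≤ ENNReal.ofReal (1 - _root_.sigmoid α) := by
  obtain ⟨hε0, hε2⟩ := hε
  have hε1 : ε < 1 := by linarith
  have h1ε : (0:ℝ) < 1 - ε := by linarith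
  set c : ℝ := τ * Real.log (ε / (1 - ε)) - α with hc
  -- the set intersected with Ioo 0 1 is Ioc 0 (sigmoid c)
  have key : {u : ℝ | sigmoid ((α + Real.log u - Real.log (1 - u)) / τ) ≤ ε} ∩
      Set.Ioo (0:ℝ) 1 = Set.Ioc 0 (sigmoid c) := by
    ext u
    simp only [Set.mem_inter_iff, Set.mem_setOf_eq, Set.mem_Ioo, Set.mem_Ioc]
    constructor
    · rintro ⟨h, h0, h1⟩
      refine ⟨h0, ?_⟩
      rw [sigmoid_le_iff ⟨hε0, hε1⟩, div_le_iff₀ hτ] at h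
      have hlog : Real.log u - Real.log (1 - u) ≤ c := by
        rw [hc]; linarith
      have := sigmoid_strictMono.monotone hlog
      rwa [sigmoid_logit ⟨h0, h1⟩] at this
    · rintro ⟨h0, h⟩
      have h1 : u < 1 := lt_of_le_of_lt h (sigmoid_lt_one c)
      refine ⟨?_, h0, h1⟩
      rw [sigmoid_le_iff ⟨hε0, hε1⟩, div_le_iff₀ hτ]
      have hlog : Real.log u - Real.log (1 - u) ≤ c := by
        by_contra hcon
        push_neg at hcon
        have := sigmoid_strictMono hcon
        rw [sigmoid_logit ⟨h0, h1⟩] at this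
        linarith
      rw [hc] at hlog; linarith
  have hmeas : (volume.restrict (Set.Ioo (0:ℝ) 1))
      {u : ℝ | sigmoid ((α + Real.log u - Real.log (1 - u)) / τ) ≤ ε}
      = ENNReal.ofReal (sigmoid c) := by
    rw [Measure.restrict_apply' measurableSet_Ioo, key, Real.volume_Ioc, sub_zero]
  have hlogle : Real.log (ε / (1 - ε)) ≤ 0 :=
    Real.log_nonpos (by positivity) (by rw [div_le_one h1ε]; linarith)
  have hupper : sigmoid c ≤ 1 - sigmoid α := by
    rw [← sigmoid_neg]
    apply sigmoid_strictMono.monotone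
    have hmul : τ * Real.log (ε / (1 - ε)) ≤ 0 := mul_nonpos_of_nonneg_of_nonpos hτ.le hlogle
    rw [hc]; linarith
  have hlower : (1 - sigmoid α) - τ / 4 * Real.log (1/ε) ≤ sigmoid c := by
    have hdist := sigmoid_dist (-α) c
    have habs : |(-α) - c| = τ * (-(Real.log (ε / (1 - ε)))) := by
      rw [hc]
      rw [show -α - (τ * Real.log (ε / (1 - ε)) - α) = τ * (-(Real.log (ε / (1 - ε)))) by ring]
      rw [abs_of_nonneg (by nlinarith)]
    have hlog2 : -(Real.log (ε / (1 - ε))) ≤ Real.log (1/ε) := by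
      have hle : (1-ε)/ε ≤ 1/ε := by gcongr; linarith
      rw [← Real.log_inv, inv_div]
      exact Real.log_le_log (by positivity) hle
    have h2 : sigmoid (-α) - sigmoid c ≤ τ / 4 * Real.log (1/ε) := by
      calc sigmoid (-α) - sigmoid c ≤ |sigmoid (-α) - sigmoid c| := le_abs_self _
        _ ≤ (1/4) * |(-α) - c| := hdist
        _ = (1/4) * (τ * (-(Real.log (ε / (1 - ε))))) := by rw [habs]
        _ ≤ τ / 4 * Real.log (1/ε) := by nlinarith
    rw [← sigmoid_neg]
    linarith
  rw [hmeas]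
  exact ⟨ENNReal.ofReal_le_ofReal hlower, ENNReal.ofReal_le_ofReal hupper⟩
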